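/- For all integers r and n with 2 ≤ r ≤ n, s(n,r) ≥ (1/(n−r+1)) · C(n,r) · D(r−1, r, n), the inequality being taken in the real numbers. (Indeed, deleting any single block from a Steiner system S(r−1,r,n) yields the collection of circuit-hyperplanes of a sparse paving matroid of rank r, and distinct pairs (system, deleted block) yield distinct matroids; each system has exactly (1/(n−r+1))·C(n,r) blocks.) -/

import Mathlib

open Matroid Set Filter Real

namespace PavingEnum

/-- The rank of a matroid: the largest cardinality of a base. -/
noncomputable def mrk {α : Type*} (M : Matroid α) : ℕ :=
  sSup {n : ℕ | ∃ B, M.IsBase B ∧ B.ncard = n}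

/-- The rank of a set in a matroid: the largest cardinality of an
independent subset of the set. -/
noncomputable def mrnk {α : Type*} (M : Matroid α) (X : Set α) : ℕ :=
  sSup {n : ℕ | ∃ I, I ⊆ X ∧ M.Indep I ∧ I.ncard = n}

/-- A circuit is a minimal dependent set. -/
def IsCircuit {α : Type*} (M : Matroid α) (C : Set α) : Prop :=
  M.Dep C ∧ ∀ D, D ⊂ C → M.Indep D

/-- A matroid of rank `r` is paving if every circuit has cardinality at least `r`. -/
def Paving {α : Type*} (M : Matroid α) : Prop :=
  ∀ C, IsCircuit M C → (mrk M : ℕ∞) ≤ C.encard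

/-- A matroid is sparse paving if both it and its dual are paving. -/
def SparsePaving {α : Type*} (M : Matroid α) : Prop :=
  Paving M ∧ Paving M✶

/-- `numMatroids n r` : the number of matroids on the ground set `{1, …, n}` of rank `r`. -/
noncomputable def numMatroids (n r : ℕ) : ℕ :=
  {M : Matroid (Fin n) | M.E = Set.univ ∧ mrk M = r}.ncard

/-- `numPaving n r` : the number of paving matroids on `{1, …, n}` of rank `r`. -/
noncomputable def numPaving (n r : ℕ) : ℕ :=
  {M : Matroid (Fin n) | M.E = Set.univ ∧ mrk M = r ∧ Paving M}.ncard

/-- `numSparsePaving n r` : the number of sparse paving matroids on `{1, …, n}` of rank `r`. -/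
noncomputable def numSparsePaving (n r : ℕ) : ℕ :=
  {M : Matroid (Fin n) | M.E = Set.univ ∧ mrk M = r ∧ SparsePaving M}.ncard

end PavingEnum

namespace PavingEnum

/-- A Steiner system S(r−1, r, n): a collection of r-element subsets (blocks) of
`{1, …, n}` such that every (r−1)-element subset is contained in exactly one block. -/
def IsSteinerSystem (n r : ℕ) (𝓑 : Finset (Finset (Fin n))) : Prop :=
  (∀ B ∈ 𝓑, B.card = r) ∧
  ∀ T : Finset (Fin n), T.card = r - 1 → ∃! B, B ∈ 𝓑 ∧ T ⊆ B

/-- `numSteiner n r` : the number of Steiner systems S(r−1, r, n). -/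
noncomputable def numSteiner (n r : ℕ) : ℕ :=
  {𝓑 : Finset (Finset (Fin n)) | IsSteinerSystem n r 𝓑}.ncard

end PavingEnum

open PavingEnum

namespace SPAux

open PavingEnum Finset

variable {n r : ℕ}

/-- Independence predicate for the sparse paving matroid with circuit-hyperplanes `𝓕`. -/
def Ind (r : ℕ) (𝓕 : Finset (Finset (Fin n))) (I : Set (Fin n)) : Prop :=
  I.ncard ≤ r ∧ ∀ A ∈ 𝓕, (A : Set (Fin n)) ≠ I

lemma card_of_mem_erase {𝓑 : Finset (Finset (Fin n))} {B₀ A : Finset (Fin n)}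
    (hS : IsSteinerSystem n r 𝓑) (hA : A ∈ 𝓑.erase B₀) : A.card = r :=
  hS.1 A (Finset.mem_of_mem_erase hA)

lemma ind_aug {𝓑 : Finset (Finset (Fin n))} {B₀ : Finset (Fin n)}
    (hS : IsSteinerSystem n r 𝓑)
    {I J : Set (Fin n)} (hI : Ind r (𝓑.erase B₀) I) (hJ : Ind r (𝓑.erase B₀) J)
    (hIJ : I.ncard < J.ncard) :
    ∃ e ∈ J, e ∉ I ∧ Ind r (𝓑.erase B₀) (insert e I) := by
  have hIfin : I.Finite := Set.toFinite I
  have hJfin : J.Finite := Set.toFinite J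
  have hJI : (J \ I).Nonempty := by
    rw [Set.diff_nonempty]
    intro hsub
    exact absurd (Set.ncard_le_ncard hsub hIfin) (not_le.mpr hIJ)
  obtain ⟨e₁, he₁⟩ := hJI
  have hins : ∀ e ∉ I, (insert e I).ncard = I.ncard + 1 :=
    fun e he => Set.ncard_insert_of_notMem he hIfin
  rcases lt_or_eq_of_le (Nat.succ_le_of_lt (lt_of_lt_of_le hIJ hJ.1)) with h1 | h1
  · -- I.ncard + 1 < r : any element works
    refine ⟨e₁, he₁.1, he₁.2, ?_, fun A hA hAeq => ?_⟩
    · rw [hins e₁ he₁.2]; omega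
    · have : (A : Set (Fin n)).ncard = r := by
        rw [Set.ncard_coe_finset]; exact card_of_mem_erase hS hA
      rw [hAeq, hins e₁ he₁.2] at this; omega
  · -- I.ncard + 1 = r
    by_contra hcon
    push_neg at hcon
    have hforb : ∀ e ∈ J \ I, ∃ A ∈ 𝓑.erase B₀, (A : Set (Fin n)) = insert e I := by
      intro e he
      have := hcon e he.1 he.2
      rw [Ind, not_and_or] at this
      rcases this with h | h
      · exact absurd (by rw [hins e he.2]; omega) h
      · push_neg at h
        obtain ⟨A, hA, hAeq⟩ := h
        exact ⟨A, hA, not_not.mp (by simpa using hAeq)⟩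
    obtain ⟨A₁, hA₁, hA₁eq⟩ := hforb e₁ he₁
    -- the finset version of I
    set T : Finset (Fin n) := hIfin.toFinset with hT
    have hTcard : T.card = r - 1 := by
      rw [hT, ← Set.ncard_eq_toFinset_card]; omega
    have hTsub : ∀ {e : Fin n} {A : Finset (Fin n)}, (A : Set (Fin n)) = insert e I → T ⊆ A := by
      intro e A hAe
      intro x hx
      have hxI : x ∈ I := by rwa [hT, Set.Finite.mem_toFinset] at hx
      have : x ∈ (A : Set (Fin n)) := by rw [hAe]; exact Set.mem_insert_of_mem _ hxI
      exact_mod_cast this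
    obtain ⟨Bu, _, hBuniq⟩ := hS.2 T hTcard
    -- all elements of J \ I coincide
    have huniq : ∀ e ∈ J \ I, e = e₁ := by
      intro e₂ he₂
      obtain ⟨A₂, hA₂, hA₂eq⟩ := hforb e₂ he₂
      have h1' : A₁ = Bu := hBuniq A₁ ⟨Finset.mem_of_mem_erase hA₁, hTsub hA₁eq⟩
      have h2' : A₂ = Bu := hBuniq A₂ ⟨Finset.mem_of_mem_erase hA₂, hTsub hA₂eq⟩
      have : (insert e₂ I : Set (Fin n)) = insert e₁ I := by
        rw [← hA₁eq, ← hA₂eq, h1', h2']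
      have he₂mem : e₂ ∈ (insert e₁ I : Set (Fin n)) := by
        rw [← this]; exact Set.mem_insert _ _
      rcases he₂mem with h | h
      · exact h
      · exact absurd h he₂.2
    have hJsub : J ⊆ insert e₁ I := by
      intro x hx
      by_cases hxI : x ∈ I
      · exact Set.mem_insert_of_mem _ hxI
      · rw [huniq x ⟨hx, hxI⟩]; exact Set.mem_insert _ _
    have hJeq : J = insert e₁ I := by
      apply Set.eq_of_subset_of_ncard_le hJsub
      rw [hins e₁ he₁.2]; omega
    exact hJ.2 A₁ hA₁ (by rw [hA₁eq, hJeq])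

end SPAux
namespace SPAux

open PavingEnum Finset

variable {n r : ℕ}

lemma ind_empty {𝓑 : Finset (Finset (Fin n))} {B₀ : Finset (Fin n)}
    (hS : IsSteinerSystem n r 𝓑) (hr : 2 ≤ r) : Ind r (𝓑.erase B₀) (∅ : Set (Fin n)) := by
  refine ⟨by simp, fun A hA hAeq => ?_⟩
  have : (A : Set (Fin n)).ncard = r := by
    rw [Set.ncard_coe_finset]; exact card_of_mem_erase hS hA
  rw [hAeq] at this
  simp at this; omega

lemma ind_subset {𝓑 : Finset (Finset (Fin n))} {B₀ : Finset (Fin n)}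
    (hS : IsSteinerSystem n r 𝓑) {I J : Set (Fin n)}
    (hJ : Ind r (𝓑.erase B₀) J) (hIJ : I ⊆ J) : Ind r (𝓑.erase B₀) I := by
  have hle : I.ncard ≤ J.ncard := Set.ncard_le_ncard hIJ (Set.toFinite J)
  refine ⟨le_trans hle hJ.1, fun A hA hAeq => ?_⟩
  have hcard : (A : Set (Fin n)).ncard = r := by
    rw [Set.ncard_coe_finset]; exact card_of_mem_erase hS hA
  have hIr : I.ncard = r := by rw [← hAeq]; exact hcard
  have hJr := hJ.1
  have : I = J := Set.eq_of_subset_of_ncard_le hIJ (by omega) (Set.toFinite J)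
  exact hJ.2 A hA (by rw [hAeq, this])

/-- The sparse paving matroid obtained from a Steiner system `𝓑` minus a block `B₀`. -/
noncomputable def SPM (n r : ℕ) (𝓑 : Finset (Finset (Fin n))) (B₀ : Finset (Fin n))
    (hS : IsSteinerSystem n r 𝓑) (hr : 2 ≤ r) : Matroid (Fin n) :=
  (IndepMatroid.ofFinite (E := (Set.univ : Set (Fin n))) Set.finite_univ
    (Ind r (𝓑.erase B₀))
    (ind_empty hS hr)
    (fun _ _ hJ hIJ => ind_subset hS hJ hIJ)
    (fun _ _ hI hJ hIJ => ind_aug hS hI hJ hIJ)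
    (fun I _ => Set.subset_univ I)).matroid

@[simp] lemma SPM_indep {𝓑 : Finset (Finset (Fin n))} {B₀ : Finset (Fin n)}
    (hS : IsSteinerSystem n r 𝓑) (hr : 2 ≤ r) {I : Set (Fin n)} :
    (SPM n r 𝓑 B₀ hS hr).Indep I ↔ Ind r (𝓑.erase B₀) I := by
  simp [SPM]

@[simp] lemma SPM_E {𝓑 : Finset (Finset (Fin n))} {B₀ : Finset (Fin n)}
    (hS : IsSteinerSystem n r 𝓑) (hr : 2 ≤ r) :
    (SPM n r 𝓑 B₀ hS hr).E = Set.univ := rfl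

lemma ind_B₀ {𝓑 : Finset (Finset (Fin n))} {B₀ : Finset (Fin n)}
    (hS : IsSteinerSystem n r 𝓑) (hB₀ : B₀ ∈ 𝓑) :
    Ind r (𝓑.erase B₀) (B₀ : Set (Fin n)) ∧ (B₀ : Set (Fin n)).ncard = r := by
  have hc : (B₀ : Set (Fin n)).ncard = r := by
    rw [Set.ncard_coe_finset]; exact hS.1 B₀ hB₀
  refine ⟨⟨hc.le, fun A hA hAeq => ?_⟩, hc⟩
  exact (Finset.ne_of_mem_erase hA) (Finset.coe_injective hAeq)

lemma SPM_base_iff {𝓑 : Finset (Finset (Fin n))} {B₀ : Finset (Fin n)}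
    (hS : IsSteinerSystem n r 𝓑) (hB₀ : B₀ ∈ 𝓑) (hr : 2 ≤ r) {B : Set (Fin n)} :
    (SPM n r 𝓑 B₀ hS hr).IsBase B ↔ Ind r (𝓑.erase B₀) B ∧ B.ncard = r := by
  rw [Matroid.isBase_iff_maximal_indep]
  constructor
  · rintro ⟨hind, hmax⟩
    rw [SPM_indep] at hind
    refine ⟨hind, ?_⟩
    by_contra hne
    have hlt : B.ncard < r := lt_of_le_of_ne hind.1 hne
    obtain ⟨e, _, heB, hins⟩ := ind_aug hS hind (ind_B₀ hS hB₀).1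
      (by rw [(ind_B₀ hS hB₀).2]; exact hlt)
    have := hmax (y := insert e B) (by rw [SPM_indep]; exact hins)
      (Set.subset_insert _ _)
    exact heB (this (Set.mem_insert _ _))
  · rintro ⟨hind, hcard⟩
    refine ⟨by rw [SPM_indep]; exact hind, fun y hy hBy => ?_⟩
    rw [SPM_indep] at hy
    have : B = y := Set.eq_of_subset_of_ncard_le hBy (by rw [hcard]; exact hy.1)
      (Set.toFinite y)
    exact this.symm.subset

lemma SPM_mrk {𝓑 : Finset (Finset (Fin n))} {B₀ : Finset (Fin n)}
    (hS : IsSteinerSystem n r 𝓑) (hB₀ : B₀ ∈ 𝓑) (hr : 2 ≤ r) :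
    mrk (SPM n r 𝓑 B₀ hS hr) = r := by
  have : {k : ℕ | ∃ B, (SPM n r 𝓑 B₀ hS hr).IsBase B ∧ B.ncard = k} = {r} := by
    ext k
    simp only [Set.mem_setOf_eq, Set.mem_singleton_iff]
    constructor
    · rintro ⟨B, hB, rfl⟩
      exact ((SPM_base_iff hS hB₀ hr).mp hB).2
    · rintro rfl
      exact ⟨(B₀ : Set (Fin n)), (SPM_base_iff hS hB₀ hr).mpr
        ⟨(ind_B₀ hS hB₀).1, (ind_B₀ hS hB₀).2⟩, (ind_B₀ hS hB₀).2⟩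
  rw [mrk, this, csSup_singleton]

end SPAux
namespace SPAux

open PavingEnum Finset

variable {n r : ℕ}

/-- Any set of size at least `r+1` contains an independent `r`-set. -/
lemma exists_ind_subset {𝓑 : Finset (Finset (Fin n))} {B₀ : Finset (Fin n)}
    (hS : IsSteinerSystem n r 𝓑) (hr : 2 ≤ r) {S : Set (Fin n)}
    (hcard : r + 1 ≤ S.ncard) :
    ∃ I ⊆ S, Ind r (𝓑.erase B₀) I ∧ I.ncard = r := by
  obtain ⟨S', hS'sub, hS'card⟩ := Set.exists_subset_card_eq hcard
  by_contra hcon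
  push_neg at hcon
  have hforb : ∀ x ∈ S', ∃ A ∈ 𝓑.erase B₀, (A : Set (Fin n)) = S' \ {x} := by
    intro x hx
    have hsub : S' \ {x} ⊆ S := (Set.diff_subset).trans hS'sub
    have hc : (S' \ {x}).ncard = r := by
      rw [Set.ncard_diff_singleton_of_mem hx]; omega
    have hnind : ¬ Ind r (𝓑.erase B₀) (S' \ {x}) := fun h => hcon _ hsub h hc
    rw [Ind, not_and_or] at hnind
    rcases hnind with h | h
    · exact absurd hc.le h
    · push_neg at h
      obtain ⟨A, hA, hAeq⟩ := h
      exact ⟨A, hA, not_not.mp (by simpa using hAeq)⟩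
  obtain ⟨x, y, hx, hy, hxy⟩ := (Set.one_lt_ncard_iff (Set.toFinite S')).mp (by omega)
  obtain ⟨A₁, hA₁, hA₁eq⟩ := hforb x hx
  obtain ⟨A₂, hA₂, hA₂eq⟩ := hforb y hy
  have hA₁₂ : A₁ ≠ A₂ := by
    intro h
    have : (S' \ {x} : Set (Fin n)) = S' \ {y} := by rw [← hA₁eq, ← hA₂eq, h]
    have hxmem : x ∈ S' \ ({y} : Set (Fin n)) := ⟨hx, by simpa using hxy⟩
    rw [← this] at hxmem
    exact hxmem.2 rfl
  set T : Finset (Fin n) := A₁ ∩ A₂ with hT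
  have hTcoe : (T : Set (Fin n)) = S' \ {x, y} := by
    rw [hT, Finset.coe_inter, hA₁eq, hA₂eq]
    ext z
    simp only [Set.mem_inter_iff, Set.mem_diff, Set.mem_singleton_iff, Set.mem_insert_iff]
    tauto
  have hTcard : T.card = r - 1 := by
    have : (T : Set (Fin n)).ncard = r - 1 := by
      rw [hTcoe]
      have : S' \ {x, y} = (S' \ {x}) \ {y} := by
        ext z; simp [Set.mem_diff]; tauto
      have hymem : y ∈ S' \ ({x} : Set (Fin n)) :=
        ⟨hy, fun h => hxy (show y = x by simpa using h).symm⟩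
      rw [this, Set.ncard_diff_singleton_of_mem hymem,
        Set.ncard_diff_singleton_of_mem hx]
      omega
    rwa [Set.ncard_coe_finset] at this
  obtain ⟨Bu, _, hBuniq⟩ := hS.2 T hTcard
  have h1 : A₁ = Bu := hBuniq A₁ ⟨Finset.mem_of_mem_erase hA₁, Finset.inter_subset_left⟩
  have h2 : A₂ = Bu := hBuniq A₂ ⟨Finset.mem_of_mem_erase hA₂, Finset.inter_subset_right⟩
  exact hA₁₂ (h1.trans h2.symm)

lemma SPM_paving {𝓑 : Finset (Finset (Fin n))} {B₀ : Finset (Fin n)}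
    (hS : IsSteinerSystem n r 𝓑) (hB₀ : B₀ ∈ 𝓑) (hr : 2 ≤ r) :
    Paving (SPM n r 𝓑 B₀ hS hr) := by
  intro C hC
  have hdep := hC.1
  rw [Matroid.dep_iff] at hdep
  have hCfin : C.Finite := Set.toFinite C
  have hrle : r ≤ C.ncard := by
    by_contra hlt
    push_neg at hlt
    apply hdep.1
    rw [SPM_indep]
    refine ⟨hlt.le, fun A hA hAeq => ?_⟩
    have : (A : Set (Fin n)).ncard = r := by
      rw [Set.ncard_coe_finset]; exact card_of_mem_erase hS hA
    rw [hAeq] at this; omega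
  rw [SPM_mrk hS hB₀ hr, ← hCfin.cast_ncard_eq]
  exact_mod_cast hrle

lemma SPM_dual_base_ncard {𝓑 : Finset (Finset (Fin n))} {B₀ : Finset (Fin n)}
    (hS : IsSteinerSystem n r 𝓑) (hB₀ : B₀ ∈ 𝓑) (hr : 2 ≤ r) (hrn : r ≤ n)
    {B : Set (Fin n)} (hB : (SPM n r 𝓑 B₀ hS hr)✶.IsBase B) : B.ncard = n - r := by
  rw [Matroid.dual_isBase_iff'] at hB
  obtain ⟨hbase, -⟩ := hB
  rw [SPM_E] at hbase
  have hcard := ((SPM_base_iff hS hB₀ hr).mp hbase).2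
  have hcompl : (Set.univ \ B).ncard = n - B.ncard := by
    rw [Set.ncard_diff (Set.subset_univ B), Set.ncard_univ]
    simp
  have huniv : (n : ℕ) = Nat.card (Fin n) := by simp
  have hBle : B.ncard ≤ n := by
    have := Set.ncard_le_ncard (Set.subset_univ B) Set.finite_univ
    rwa [Set.ncard_univ, Nat.card_eq_fintype_card, Fintype.card_fin] at this
  omega

lemma SPM_dual_mrk {𝓑 : Finset (Finset (Fin n))} {B₀ : Finset (Fin n)}
    (hS : IsSteinerSystem n r 𝓑) (hB₀ : B₀ ∈ 𝓑) (hr : 2 ≤ r) (hrn : r ≤ n) :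
    mrk (SPM n r 𝓑 B₀ hS hr)✶ = n - r := by
  have hex : (SPM n r 𝓑 B₀ hS hr)✶.IsBase (Set.univ \ (B₀ : Set (Fin n))) := by
    rw [Matroid.dual_isBase_iff']
    refine ⟨?_, Set.diff_subset.trans (by rw [SPM_E])⟩
    rw [SPM_E, Set.diff_diff_cancel_left (Set.subset_univ _)]
    exact (SPM_base_iff hS hB₀ hr).mpr ⟨(ind_B₀ hS hB₀).1, (ind_B₀ hS hB₀).2⟩
  have : {k : ℕ | ∃ B, (SPM n r 𝓑 B₀ hS hr)✶.IsBase B ∧ B.ncard = k} = {n - r} := by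
    ext k
    simp only [Set.mem_setOf_eq, Set.mem_singleton_iff]
    constructor
    · rintro ⟨B, hB, rfl⟩
      exact SPM_dual_base_ncard hS hB₀ hr hrn hB
    · rintro rfl
      exact ⟨_, hex, SPM_dual_base_ncard hS hB₀ hr hrn hex⟩
  rw [mrk, this, csSup_singleton]

lemma SPM_dual_paving {𝓑 : Finset (Finset (Fin n))} {B₀ : Finset (Fin n)}
    (hS : IsSteinerSystem n r 𝓑) (hB₀ : B₀ ∈ 𝓑) (hr : 2 ≤ r) (hrn : r ≤ n) :
    Paving (SPM n r 𝓑 B₀ hS hr)✶ := by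
  intro C hC
  have hdep := hC.1
  rw [Matroid.dep_iff] at hdep
  have hCfin : C.Finite := Set.toFinite C
  have hrle : n - r ≤ C.ncard := by
    by_contra hlt
    push_neg at hlt
    apply hdep.1
    have hcompl : r + 1 ≤ (Set.univ \ C).ncard := by
      rw [Set.ncard_diff (Set.subset_univ C), Set.ncard_univ,
        Nat.card_eq_fintype_card, Fintype.card_fin]
      omega
    obtain ⟨I, hIsub, hI, hIcard⟩ := exists_ind_subset (B₀ := B₀) hS hr hcompl
    rw [Matroid.dual_indep_iff_exists']
    refine ⟨by rw [SPM_E]; exact Set.subset_univ C,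
      I, (SPM_base_iff hS hB₀ hr).mpr ⟨hI, hIcard⟩, ?_⟩
    exact (Set.disjoint_of_subset_left hIsub Set.disjoint_sdiff_left).symm
  rw [SPM_dual_mrk hS hB₀ hr hrn, ← hCfin.cast_ncard_eq]
  exact_mod_cast hrle

lemma SPM_mem_target {𝓑 : Finset (Finset (Fin n))} {B₀ : Finset (Fin n)}
    (hS : IsSteinerSystem n r 𝓑) (hB₀ : B₀ ∈ 𝓑) (hr : 2 ≤ r) (hrn : r ≤ n) :
    (SPM n r 𝓑 B₀ hS hr).E = Set.univ ∧ mrk (SPM n r 𝓑 B₀ hS hr) = r ∧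
      SparsePaving (SPM n r 𝓑 B₀ hS hr) :=
  ⟨SPM_E hS hr, SPM_mrk hS hB₀ hr,
    SPM_paving hS hB₀ hr, SPM_dual_paving hS hB₀ hr hrn⟩

end SPAux
namespace SPAux

open PavingEnum Finset

variable {n r : ℕ}

instance : Finite (Matroid (Fin n)) := by
  have hinj : Function.Injective
      (fun M : Matroid (Fin n) => (M.E, M.Indep)) := by
    intro M N h
    simp only [Prod.mk.injEq] at h
    exact Matroid.ext_indep h.1 (fun ⦃I⦄ _ => by rw [h.2])
  exact Finite.of_injective _ hinj

/-- The deleted block is determined by the rest of the system. -/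
lemma erase_eq_imp_eq {𝓑₁ 𝓑₂ : Finset (Finset (Fin n))} {B₁ B₂ : Finset (Fin n)}
    (hS₁ : IsSteinerSystem n r 𝓑₁) (hS₂ : IsSteinerSystem n r 𝓑₂)
    (hB₁ : B₁ ∈ 𝓑₁) (hB₂ : B₂ ∈ 𝓑₂) (hr : 2 ≤ r)
    (h : 𝓑₁.erase B₁ = 𝓑₂.erase B₂) : B₁ = B₂ ∧ 𝓑₁ = 𝓑₂ := by
  have key : ∀ (𝓒₁ 𝓒₂ : Finset (Finset (Fin n))) (C₁ C₂ : Finset (Fin n)),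
      IsSteinerSystem n r 𝓒₁ → IsSteinerSystem n r 𝓒₂ → C₁ ∈ 𝓒₁ → C₂ ∈ 𝓒₂ →
      𝓒₁.erase C₁ = 𝓒₂.erase C₂ → C₁ ⊆ C₂ := by
    intro 𝓒₁ 𝓒₂ C₁ C₂ hT₁ hT₂ hC₁ hC₂ heq x hx
    have hcard₁ : C₁.card = r := hT₁.1 C₁ hC₁
    -- pick y ∈ C₁ different from x
    have h2 : 1 < C₁.card := by omega
    obtain ⟨y, hy, hyx⟩ : ∃ y ∈ C₁, y ≠ x := by
      rcases Finset.exists_mem_ne h2 x with ⟨y, hy, hyx⟩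
      exact ⟨y, hy, hyx⟩
    set T := C₁.erase y with hT
    have hTcard : T.card = r - 1 := by
      rw [hT, Finset.card_erase_of_mem hy, hcard₁]
    have hxT : x ∈ T := Finset.mem_erase.mpr ⟨fun h' => hyx h'.symm, hx⟩
    have hTC₁ : T ⊆ C₁ := Finset.erase_subset _ _
    obtain ⟨A, hA, hAuniq⟩ := hT₂.2 T hTcard
    by_cases hAC₂ : A = C₂
    · exact hAC₂ ▸ hA.2 hxT
    · exfalso
      have hA' : A ∈ 𝓒₁.erase C₁ := by
        rw [heq]; exact Finset.mem_erase.mpr ⟨hAC₂, hA.1⟩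
      obtain ⟨Bu, _, hBuniq⟩ := hT₁.2 T hTcard
      have e1 : A = Bu := hBuniq A ⟨Finset.mem_of_mem_erase hA', hA.2⟩
      have e2 : C₁ = Bu := hBuniq C₁ ⟨hC₁, hTC₁⟩
      exact (Finset.ne_of_mem_erase hA') (e1.trans e2.symm)
  have hsub₁ : B₁ ⊆ B₂ := key 𝓑₁ 𝓑₂ B₁ B₂ hS₁ hS₂ hB₁ hB₂ h
  have hsub₂ : B₂ ⊆ B₁ := key 𝓑₂ 𝓑₁ B₂ B₁ hS₂ hS₁ hB₂ hB₁ h.symm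
  have hBeq : B₁ = B₂ := Finset.Subset.antisymm hsub₁ hsub₂
  refine ⟨hBeq, ?_⟩
  have : insert B₁ (𝓑₁.erase B₁) = insert B₂ (𝓑₂.erase B₂) := by rw [h, hBeq]
  rwa [Finset.insert_erase hB₁, Finset.insert_erase hB₂] at this

/-- The matroid determines the family of deleted-block circuit-hyperplanes. -/
lemma SPM_inj {𝓑₁ 𝓑₂ : Finset (Finset (Fin n))} {B₁ B₂ : Finset (Fin n)}
    (hS₁ : IsSteinerSystem n r 𝓑₁) (hS₂ : IsSteinerSystem n r 𝓑₂)
    (hB₁ : B₁ ∈ 𝓑₁) (hB₂ : B₂ ∈ 𝓑₂) (hr : 2 ≤ r)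
    (h : SPM n r 𝓑₁ B₁ hS₁ hr = SPM n r 𝓑₂ B₂ hS₂ hr) : 𝓑₁ = 𝓑₂ ∧ B₁ = B₂ := by
  have hind : ∀ I : Set (Fin n), Ind r (𝓑₁.erase B₁) I ↔ Ind r (𝓑₂.erase B₂) I := by
    intro I
    rw [← SPM_indep hS₁ hr, ← SPM_indep hS₂ hr, h]
  have herase : 𝓑₁.erase B₁ = 𝓑₂.erase B₂ := by
    ext A
    constructor
    · intro hA
      have hcard : A.card = r := card_of_mem_erase hS₁ hA
      have hnind : ¬ Ind r (𝓑₁.erase B₁) (A : Set (Fin n)) :=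
        fun hind' => hind'.2 A hA rfl
      rw [hind] at hnind
      rw [Ind, not_and_or] at hnind
      rcases hnind with h' | h'
      · exact absurd (by rw [Set.ncard_coe_finset, hcard]) h'
      · push_neg at h'
        obtain ⟨A', hA', hA'eq⟩ := h'
        rwa [Finset.coe_injective hA'eq] at hA'
    · intro hA
      have hcard : A.card = r := card_of_mem_erase hS₂ hA
      have hnind : ¬ Ind r (𝓑₂.erase B₂) (A : Set (Fin n)) :=
        fun hind' => hind'.2 A hA rfl
      rw [← hind] at hnind
      rw [Ind, not_and_or] at hnind
      rcases hnind with h' | h'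
      · exact absurd (by rw [Set.ncard_coe_finset, hcard]) h'
      · push_neg at h'
        obtain ⟨A', hA', hA'eq⟩ := h'
        rwa [Finset.coe_injective hA'eq] at hA'
  obtain ⟨h1, h2⟩ := erase_eq_imp_eq hS₁ hS₂ hB₁ hB₂ hr herase
  exact ⟨h2, h1⟩

end SPAux
namespace SPAux

open PavingEnum Finset

variable {n r : ℕ}

/-- Double counting: a Steiner system S(r−1, r, n) has `C(n, r−1) / r` blocks. -/
lemma steiner_card_mul {𝓑 : Finset (Finset (Fin n))}
    (hS : IsSteinerSystem n r 𝓑) (hr : 1 ≤ r) :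
    𝓑.card * r = n.choose (r - 1) := by
  have hunion : (Finset.univ : Finset (Fin n)).powersetCard (r - 1) =
      𝓑.biUnion (fun B => B.powersetCard (r - 1)) := by
    ext T
    simp only [Finset.mem_powersetCard, Finset.mem_biUnion]
    constructor
    · rintro ⟨-, hTcard⟩
      obtain ⟨B, hB, -⟩ := hS.2 T hTcard
      exact ⟨B, hB.1, hB.2, hTcard⟩
    · rintro ⟨B, -, -, hTcard⟩
      exact ⟨Finset.subset_univ T, hTcard⟩
  have hdisj : ∀ B₁ ∈ 𝓑, ∀ B₂ ∈ 𝓑, B₁ ≠ B₂ →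
      Disjoint (B₁.powersetCard (r - 1)) (B₂.powersetCard (r - 1)) := by
    intro B₁ hB₁ B₂ hB₂ hne
    rw [Finset.disjoint_left]
    intro T hT₁ hT₂
    rw [Finset.mem_powersetCard] at hT₁ hT₂
    obtain ⟨Bu, -, hBuniq⟩ := hS.2 T hT₁.2
    exact hne ((hBuniq B₁ ⟨hB₁, hT₁.1⟩).trans (hBuniq B₂ ⟨hB₂, hT₂.1⟩).symm)
  have hcard := congrArg Finset.card hunion
  rw [Finset.card_powersetCard, Finset.card_biUnion hdisj, Finset.card_univ,
    Fintype.card_fin] at hcard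
  have hterm : ∀ B ∈ 𝓑, (B.powersetCard (r - 1)).card = r := by
    intro B hB
    rw [Finset.card_powersetCard, hS.1 B hB]
    have h1 : r - (r - 1) = 1 := by omega
    rw [← Nat.choose_symm (Nat.sub_le r 1), h1, Nat.choose_one_right]
  rw [Finset.sum_congr rfl hterm, Finset.sum_const, smul_eq_mul] at hcard
  omega

end SPAux

open PavingEnum SPAux

/-- For 2 ≤ r ≤ n, s(n,r) ≥ (1/(n−r+1)) · C(n,r) · D(r−1, r, n). -/
theorem sparse_paving_vs_steiner (n r : ℕ) (hr : 2 ≤ r) (hrn : r ≤ n) :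
    (1 / ((n : ℝ) - r + 1)) * (n.choose r : ℝ) * (numSteiner n r : ℝ) ≤
      (numSparsePaving n r : ℝ) := by
  classical
  set 𝒮 : Finset (Finset (Finset (Fin n))) :=
    Finset.univ.filter (fun 𝓑 => IsSteinerSystem n r 𝓑) with h𝒮
  have hSteq : numSteiner n r = 𝒮.card := by
    rw [numSteiner, ← Set.ncard_coe_finset]
    congr 1
    ext 𝓑
    simp [h𝒮]
  have hxpos : (0:ℝ) < (n : ℝ) - r + 1 := by
    have : (r:ℝ) ≤ n := by exact_mod_cast hrn
    linarith
  rcases 𝒮.eq_empty_or_nonempty with hemp | ⟨𝓑s, h𝓑s⟩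
  · rw [hSteq, hemp]
    simp
  · have hPs : IsSteinerSystem n r 𝓑s := by
      rw [h𝒮, Finset.mem_filter] at h𝓑s; exact h𝓑s.2
    set b := 𝓑s.card with hb
    have hcardall : ∀ 𝓑 ∈ 𝒮, 𝓑.card = b := by
      intro 𝓑 h𝓑
      rw [h𝒮, Finset.mem_filter] at h𝓑
      have h1 := steiner_card_mul h𝓑.2 (by omega)
      have h2 := steiner_card_mul hPs (by omega)
      have : 𝓑.card * r = b * r := by rw [h1, hb, h2]
      exact Nat.eq_of_mul_eq_mul_right (by omega) this
    -- the pairs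
    set Pr : Finset ((_ : Finset (Finset (Fin n))) × Finset (Fin n)) :=
      𝒮.sigma (fun 𝓑 => 𝓑) with hPr
    have hPrcard : Pr.card = 𝒮.card * b := by
      rw [hPr, Finset.card_sigma]
      exact Finset.sum_const_nat hcardall
    -- the map into matroids
    set g : ((_ : Finset (Finset (Fin n))) × Finset (Fin n)) → Matroid (Fin n) :=
      fun p => if h : IsSteinerSystem n r p.1 ∧ p.2 ∈ p.1
        then SPM n r p.1 p.2 h.1 hr else Matroid.emptyOn (Fin n) with hg
    have hmem : ∀ p ∈ Pr, IsSteinerSystem n r p.1 ∧ p.2 ∈ p.1 := by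
      intro p hp
      rw [hPr, Finset.mem_sigma] at hp
      have := hp.1
      rw [h𝒮, Finset.mem_filter] at this
      exact ⟨this.2, hp.2⟩
    have hinj : Set.InjOn g ↑Pr := by
      intro p hp q hq hgpq
      have hp' := hmem p (by exact_mod_cast hp)
      have hq' := hmem q (by exact_mod_cast hq)
      rw [hg] at hgpq
      simp only [dif_pos hp', dif_pos hq'] at hgpq
      obtain ⟨pa, pb⟩ := p
      obtain ⟨qa, qb⟩ := q
      obtain ⟨h1, h2⟩ := SPM_inj hp'.1 hq'.1 hp'.2 hq'.2 hr hgpq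
      simp only at h1 h2
      subst h1; subst h2; rfl
    have himg : g '' ↑Pr ⊆
        {M : Matroid (Fin n) | M.E = Set.univ ∧ mrk M = r ∧ SparsePaving M} := by
      rintro - ⟨p, hp, rfl⟩
      have hp' := hmem p (by exact_mod_cast hp)
      rw [hg]
      simp only [dif_pos hp']
      exact SPM_mem_target hp'.1 hp'.2 hr hrn
    have hcount : 𝒮.card * b ≤ numSparsePaving n r := by
      have e1 : (Pr : Set ((_ : Finset (Finset (Fin n))) × Finset (Fin n))).ncard
          = Pr.card := Set.ncard_coe_finset Pr
      have e2 := Set.ncard_image_of_injOn hinj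
      have e3 : (g '' ↑Pr).ncard ≤ numSparsePaving n r :=
        Set.ncard_le_ncard himg (Set.toFinite _)
      omega
    -- the binomial identity
    have hbr : b * r = n.choose (r - 1) := steiner_card_mul hPs (by omega)
    have hid : n.choose r * r = n.choose (r - 1) * (n - r + 1) := by
      have h1 : r - 1 + 1 = r := by omega
      have h2 : n - (r - 1) = n - r + 1 := by omega
      have := Nat.choose_succ_right_eq n (r - 1)
      rw [h1, h2] at this
      exact this
    have hC : n.choose r = b * (n - r + 1) := by
      have : n.choose r * r = b * (n - r + 1) * r := by
        rw [hid, ← hbr]; ring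
      exact Nat.eq_of_mul_eq_mul_right (by omega) this
    -- final real arithmetic
    rw [hSteq, hC]
    have hxcast : ((n - r + 1 : ℕ) : ℝ) = (n : ℝ) - r + 1 := by
      push_cast [Nat.cast_sub hrn]; ring
    have hlhs : (1 / ((n : ℝ) - r + 1)) * ((b * (n - r + 1) : ℕ) : ℝ) * (𝒮.card : ℝ)
        = (𝒮.card * b : ℕ) := by
      push_cast [Nat.cast_sub hrn]
      field_simp
    rw [hlhs]
    exact_mod_cast hcount
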